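/- arXiv:2211.08474 — 2 statements merged into one kernel-verified Lean document; each statement's English description precedes it below -/
import Mathlib

section
/- Let C ∈ ℝ^{m×n}, D ∈ ℝ^{n×m}, and V₂ ∈ ℝ^{n×s} be matrices such that V₂ᵀ·V₂ = I_s (orthonormal columns) and Iₙ − D·C = V₂·V₂ᵀ. Let M > 0, let c_v ∈ ℝ^m and G_v ∈ ℝ^{m×ξ}, and suppose x ∈ ℝ^n satisfies ‖x‖₂ ≤ M and y = C·x + v for some v in the zonotope Z(c_v, G_v). Then x belongs to the zonotope Z(D·(y − c_v), [D·G_v M·V₂]), where [D·G_v M·V₂] ∈ ℝ^{n×(ξ+s)} is the horizontal concatenation of the matrices D·G_v and M·V₂. -/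
open Matrix Set

/-- The zonotope with center `c` and generator matrix `G`:
`Z(c,G) = {c + Gβ : β, ‖β‖_∞ ≤ 1}` (the norm on `ι → ℝ` is the sup norm). -/
def zonotope {n : ℕ} {ι : Type*} [Fintype ι]
    (c : Fin n → ℝ) (G : Matrix (Fin n) ι ℝ) : Set (Fin n → ℝ) :=
  {x | ∃ β : ι → ℝ, ‖β‖ ≤ 1 ∧ x = c + G.mulVec β}

/-- State-space region consistent with a measurement: if `‖x‖₂ ≤ M`, `y = C x + v` with
`v ∈ Z(c_v, G_v)`, `V₂ᵀ V₂ = I`, and `Iₙ − D C = V₂ V₂ᵀ`, then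
`x ∈ Z(D(y − c_v), [D G_v  M V₂])`. -/
theorem mem_consistent_zonotope {m n s ξ : ℕ}
    (C : Matrix (Fin m) (Fin n) ℝ) (D : Matrix (Fin n) (Fin m) ℝ)
    (V₂ : Matrix (Fin n) (Fin s) ℝ)
    (hV : V₂ᵀ * V₂ = 1)
    (hDC : (1 : Matrix (Fin n) (Fin n) ℝ) - D * C = V₂ * V₂ᵀ)
    (M : ℝ) (hM : 0 < M)
    (c_v : Fin m → ℝ) (G_v : Matrix (Fin m) (Fin ξ) ℝ)
    (x : Fin n → ℝ) (hx : Real.sqrt (∑ i, x i ^ 2) ≤ M)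
    (v : Fin m → ℝ) (hv : v ∈ zonotope c_v G_v)
    (y : Fin m → ℝ) (hy : y = C.mulVec x + v) :
    x ∈ zonotope (D.mulVec (y - c_v)) (Matrix.fromCols (D * G_v) (M • V₂)) := by
  obtain ⟨βv, hβv, hveq⟩ := hv
  refine ⟨Sum.elim (-βv) (fun i => M⁻¹ * (V₂ᵀ.mulVec x i)), ?_, ?_⟩
  · rw [pi_norm_le_iff_of_nonneg zero_le_one]
    rintro (i | i)
    · simpa using (norm_le_pi_norm (-βv) i).trans (by simpa using hβv)
    · have hcol : ∑ j, V₂ j i ^ 2 = 1 := by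
        have := congrFun (congrFun hV i) i
        simpa [Matrix.mul_apply, Matrix.transpose_apply, Matrix.one_apply, sq] using this
      have hCS : (∑ j, V₂ j i * x j) ^ 2 ≤ (∑ j, V₂ j i ^ 2) * ∑ j, x j ^ 2 := by
        exact Finset.sum_mul_sq_le_sq_mul_sq Finset.univ (fun j => V₂ j i) x
      have habs : |∑ j, V₂ j i * x j| ≤ M := by
        have h1 : |∑ j, V₂ j i * x j| = Real.sqrt ((∑ j, V₂ j i * x j) ^ 2) :=
          (Real.sqrt_sq_eq_abs _).symm
        rw [h1]
        calc Real.sqrt ((∑ j, V₂ j i * x j) ^ 2) ≤ Real.sqrt (∑ j, x j ^ 2) := by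
              apply Real.sqrt_le_sqrt
              simpa [hcol] using hCS
          _ ≤ M := hx
      show ‖M⁻¹ * (V₂ᵀ.mulVec x i)‖ ≤ 1
      rw [Real.norm_eq_abs, abs_mul, abs_of_pos (inv_pos.mpr hM), inv_mul_le_iff₀ hM, mul_one]
      simpa [Matrix.mulVec, dotProduct, Matrix.transpose_apply] using habs
  · have hyc : y - c_v = C.mulVec x + G_v.mulVec βv := by
      rw [hy, hveq]; abel
    have hproj : (V₂ * V₂ᵀ).mulVec x = x - (D * C).mulVec x := by
      rw [← hDC, Matrix.sub_mulVec, Matrix.one_mulVec]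
    have hsmul : (fun i => M • (M⁻¹ * (V₂ᵀ.mulVec x i))) = V₂ᵀ.mulVec x := by
      funext i; rw [smul_eq_mul]; field_simp
    have hVV : V₂.mulVec (V₂ᵀ.mulVec x) = x - (D * C).mulVec x := by
      rw [Matrix.mulVec_mulVec, hproj]
    rw [Matrix.fromCols_mulVec_sumElim, hyc, Matrix.mulVec_add,
      Matrix.smul_mulVec, Matrix.mulVec_neg, ← Matrix.mulVec_mulVec,
      ← Matrix.mulVec_smul]
    rw [show (M • fun i => M⁻¹ * V₂ᵀ.mulVec x i) = V₂ᵀ.mulVec x from hsmul, hVV, Matrix.mulVec_mulVec]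
    abel
end

section
/- Consider the discrete-time system x(k+1) = A·x(k) + B·u(k) + w(k) with A ∈ ℝ^{n×n}, B ∈ ℝ^{n×m}, known inputs u(k) ∈ ℝ^m, and process noise w(k) ∈ W ⊆ ℝ^n for all k. Let p, q be natural numbers with q < p, suppose x(0) ∈ X₀ ⊆ ℝ^n, and suppose for every k ≥ 1 there are sets Y_k^1, …, Y_k^p ⊆ ℝ^n together with a set S_k ⊆ {1,…,p} of cardinality |S_k| ≥ p − q such that x(k) ∈ Y_k^i for every i ∈ S_k (at most q sensors, possibly different ones at each time, are attacked). Define recursively X̂₀ = X₀ and, for k ≥ 1, X̂_k = (A·X̂_{k−1} ⊕ {B·u(k−1)} ⊕ W) ∩ (⋃_{J ⊆ {1,…,p}, |J| = p−q} ⋂_{i∈J} Y_k^i). Then x(k) ∈ X̂_k for every k ≥ 0. -/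
open Matrix Set Pointwise

/-- Resilient measurement update: under time-varying attacks compromising at most `q < p`
sensors at each time (so the true state lies in `Y_k^i` for all `i` in some set `S_k`
with `|S_k| ≥ p − q`), the true state lies in every measurement update `X̂_k` defined by
`X̂₀ = X₀` and
`X̂_k = (A·X̂_{k−1} ⊕ {B u(k−1)} ⊕ W) ∩ ⋃_{|J| = p−q} ⋂_{i ∈ J} Y_k^i`. -/
theorem mem_measurement_update_resilient {n m p q : ℕ} (hq : q < p)
    (A : Matrix (Fin n) (Fin n) ℝ) (B : Matrix (Fin n) (Fin m) ℝ)
    (W X₀ : Set (Fin n → ℝ)) (u : ℕ → Fin m → ℝ) (w : ℕ → Fin n → ℝ)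
    (x : ℕ → Fin n → ℝ)
    (hdyn : ∀ k, x (k + 1) = A.mulVec (x k) + B.mulVec (u k) + w k)
    (hw : ∀ k, w k ∈ W) (hx0 : x 0 ∈ X₀)
    (Y : ℕ → Fin p → Set (Fin n → ℝ))
    (S : ℕ → Finset (Fin p))
    (hS : ∀ k ≥ 1, p - q ≤ (S k).card)
    (hY : ∀ k ≥ 1, ∀ i ∈ S k, x k ∈ Y k i)
    (Xhat : ℕ → Set (Fin n → ℝ))
    (hXhat0 : Xhat 0 = X₀)
    (hXhat : ∀ k, Xhat (k + 1) =
      ((A.mulVec '' Xhat k) + {B.mulVec (u k)} + W) ∩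
        ⋃ J ∈ {J : Finset (Fin p) | J.card = p - q}, ⋂ i ∈ J, Y (k + 1) i) :
    ∀ k, x k ∈ Xhat k := by
  intro k
  induction k with
  | zero => rw [hXhat0]; exact hx0
  | succ k ih =>
    rw [hXhat k]
    constructor
    · rw [hdyn k]
      exact Set.add_mem_add (Set.add_mem_add (Set.mem_image_of_mem _ ih) rfl) (hw k)
    · obtain ⟨J, hJsub, hJcard⟩ := Finset.exists_subset_card_eq (hS (k + 1) le_add_self)
      refine Set.mem_biUnion (show J ∈ {J : Finset (Fin p) | J.card = p - q} from hJcard) ?_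
      exact Set.mem_biInter fun i hi => hY (k + 1) le_add_self i (hJsub hi)
end
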